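/- If a finite simplicial complex X strongly collapses onto a subcomplex Y, then X simplicially collapses onto Y. -/
import Mathlib


open Finset

attribute [local instance] Classical.propDecidable

noncomputable section

universe u v

/-- A finite abstract simplicial complex: a finite collection of nonempty finite sets
closed under taking nonempty subsets. -/
def IsComplex {V : Type u} (X : Finset (Finset V)) : Prop :=
  (∀ s ∈ X, s.Nonempty) ∧ ∀ s ∈ X, ∀ t : Finset V, t ⊆ s → t.Nonempty → t ∈ X

/-- `s` is a maximal simplex (facet) of `X`. -/
def IsFacet {V : Type u} (X : Finset (Finset V)) (s : Finset V) : Prop :=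
  s ∈ X ∧ ∀ t ∈ X, s ⊆ t → t = s

/-- An elementary collapse: `σ` is a free face of `X` whose unique maximal coface is `τ`,
and `Y` results from removing all simplices containing `σ`. -/
def ElemCollapse {V : Type u} (X Y : Finset (Finset V)) : Prop :=
  ∃ σ τ : Finset V, σ ∈ X ∧ IsFacet X τ ∧ σ ⊂ τ ∧
    (∀ t ∈ X, σ ⊆ t → t ⊆ τ) ∧ Y = X.filter (fun s => ¬ σ ⊆ s)

/-- `X` simplicially collapses onto `Y`. -/
def Collapses {V : Type u} (X Y : Finset (Finset V)) : Prop :=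
  Relation.ReflTransGen ElemCollapse X Y

/-- `X` is collapsible: it collapses to a single vertex. -/
def Collapsible {V : Type u} (X : Finset (Finset V)) : Prop :=
  ∃ v : V, Collapses X {{v}}

/-- The vertex `v` is dominated by the vertex `w ≠ v`: every facet containing `v`
contains `w`. -/
def Dominated {V : Type u} (X : Finset (Finset V)) (v w : V) : Prop :=
  w ≠ v ∧ ∀ s : Finset V, IsFacet X s → v ∈ s → w ∈ s

/-- An elementary strong collapse: deletion of a dominated vertex. -/
def ElemStrongCollapse {V : Type u} (X Y : Finset (Finset V)) : Prop :=
  ∃ v w : V, {v} ∈ X ∧ Dominated X v w ∧ Y = X.filter (fun s => v ∉ s)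

/-- `X` strongly collapses onto `Y`. -/
def StrongCollapses {V : Type u} (X Y : Finset (Finset V)) : Prop :=
  Relation.ReflTransGen ElemStrongCollapse X Y

/-- `X` is strongly collapsible: it strongly collapses to a single vertex. -/
def StrongCollapsible {V : Type u} (X : Finset (Finset V)) : Prop :=
  ∃ v : V, StrongCollapses X {{v}}

/-- The set of vertices of a complex. -/
def vertexSet {V : Type u} (X : Finset (Finset V)) : Finset V := X.sup id

/-- The link of a simplex `σ` in `X`. -/
def linkC {V : Type u} (X : Finset (Finset V)) (σ : Finset V) : Finset (Finset V) :=
  X.filter (fun η => Disjoint η σ ∧ η ∪ σ ∈ X)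

/-- The face-deletion of `σ` in `X`. -/
def faceDeletion {V : Type u} (X : Finset (Finset V)) (σ : Finset V) : Finset (Finset V) :=
  X.filter (fun η => ¬ σ ⊆ η)

/-- The simplicial join of two complexes (on disjoint vertex sets, via `Sum`). -/
def joinC {A : Type u} {B : Type v} (X : Finset (Finset A)) (Y : Finset (Finset B)) :
    Finset (Finset (A ⊕ B)) :=
  (((insert (∅ : Finset A) X) ×ˢ (insert (∅ : Finset B) Y)).image
      (fun p => p.1.image Sum.inl ∪ p.2.image Sum.inr)).filter (·.Nonempty)

/-- The flag (clique) complex on the admissible vertices (those satisfying `P`) of a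
finite type, with respect to a (reflexive, symmetric) compatibility relation `R`:
simplices are the nonempty finite sets of admissible vertices that are pairwise
compatible. -/
def cliqueComplex {A : Type u} [Fintype A] (P : A → Prop) (R : A → A → Prop) :
    Finset (Finset A) :=
  Finset.univ.filter (fun s : Finset A =>
    s.Nonempty ∧ (∀ a ∈ s, P a) ∧ ∀ a ∈ s, ∀ b ∈ s, R a b)

/-- A complex is a cone if some vertex lies in every maximal simplex. -/
def IsCone {A : Type u} (X : Finset (Finset A)) : Prop :=
  ∃ v : A, {v} ∈ X ∧ ∀ s, IsFacet X s → v ∈ s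

/-- Simplicial isomorphism (onto): `Y` is the image of `X` under an injection of
vertices. -/
def Isom {A : Type u} {B : Type v} (X : Finset (Finset A)) (Y : Finset (Finset B)) : Prop :=
  ∃ f : A → B, Function.Injective f ∧ Y = X.image (fun s => s.image f)

lemma complex_filter_not_sub {V : Type u} (X : Finset (Finset V)) (hX : IsComplex X)
    (σ : Finset V) : IsComplex (X.filter (fun s => ¬ σ ⊆ s)) := by
  constructor
  · intro s hs; exact hX.1 s (Finset.mem_filter.mp hs).1
  · intro s hs t hts htne
    rw [Finset.mem_filter] at hs ⊢
    exact ⟨hX.2 s hs.1 t hts htne, fun hv => hs.2 (hv.trans hts)⟩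

lemma complex_filter_notMem {V : Type u} (X : Finset (Finset V)) (hX : IsComplex X)
    (v : V) : IsComplex (X.filter (fun s => v ∉ s)) := by
  constructor
  · intro s hs; exact hX.1 s (Finset.mem_filter.mp hs).1
  · intro s hs t hts htne
    rw [Finset.mem_filter] at hs ⊢
    exact ⟨hX.2 s hs.1 t hts htne, fun hv => hs.2 (hts hv)⟩

lemma exists_facet {V : Type u} (X : Finset (Finset V)) (s : Finset V) (hs : s ∈ X) :
    ∃ f, IsFacet X f ∧ s ⊆ f := by
  obtain ⟨f, hf, hmax⟩ := Finset.exists_max_image (X.filter (fun t => s ⊆ t))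
    (fun t => t.card) ⟨s, Finset.mem_filter.mpr ⟨hs, subset_refl s⟩⟩
  rw [Finset.mem_filter] at hf
  refine ⟨f, ⟨hf.1, fun t ht hft => ?_⟩, hf.2⟩
  have := hmax t (Finset.mem_filter.mpr ⟨ht, hf.2.trans hft⟩)
  exact (Finset.eq_of_subset_of_card_le hft this).symm

lemma key_collapse {V : Type u} (v w : V) (hvw : w ≠ v) :
    ∀ n (Y : Finset (Finset V)), (Y.filter (fun s => v ∈ s ∧ w ∉ s)).card ≤ n →
    IsComplex Y → (∀ s ∈ Y, v ∈ s → w ∉ s → insert w s ∈ Y) →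
    Collapses Y (Y.filter (fun s => v ∉ s)) := by
  have base : ∀ (Y : Finset (Finset V)), IsComplex Y →
      (Y.filter (fun s => v ∈ s ∧ w ∉ s)) = ∅ →
      Y.filter (fun s => v ∉ s) = Y := by
    intro Y hY hemp
    apply Finset.filter_true_of_mem
    intro s hs hv
    by_cases hw : w ∈ s
    · have hne : (s.erase w).Nonempty := ⟨v, Finset.mem_erase.mpr ⟨fun h => hvw h.symm, hv⟩⟩
      have h1 : s.erase w ∈ Y := hY.2 s hs _ (Finset.erase_subset w s) hne
      have : s.erase w ∈ Y.filter (fun s => v ∈ s ∧ w ∉ s) :=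
        Finset.mem_filter.mpr ⟨h1, Finset.mem_erase.mpr ⟨fun h => hvw h.symm, hv⟩,
          Finset.notMem_erase w s⟩
      simp [hemp] at this
    · have : s ∈ Y.filter (fun s => v ∈ s ∧ w ∉ s) := Finset.mem_filter.mpr ⟨hs, hv, hw⟩
      simp [hemp] at this
  intro n
  induction n with
  | zero =>
    intro Y hcard hY hinv
    rw [base Y hY (Finset.card_eq_zero.mp (Nat.le_zero.mp hcard))]
    exact Relation.ReflTransGen.refl
  | succ n ih =>
    intro Y hcard hY hinv
    by_cases hemp : (Y.filter (fun s => v ∈ s ∧ w ∉ s)) = ∅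
    · rw [base Y hY hemp]; exact Relation.ReflTransGen.refl
    · obtain ⟨σ, hσ, hmax⟩ := Finset.exists_max_image _ (fun t => t.card)
        (Finset.nonempty_iff_ne_empty.mpr hemp)
      rw [Finset.mem_filter] at hσ
      obtain ⟨hσY, hvσ, hwσ⟩ := hσ
      have hτY : insert w σ ∈ Y := hinv σ hσY hvσ hwσ
      -- coface claim
      have hcof : ∀ t ∈ Y, σ ⊆ t → t = σ ∨ t = insert w σ := by
        intro t ht hst
        by_cases hwt : w ∈ t
        · right
          have hne : (t.erase w).Nonempty := ⟨v, Finset.mem_erase.mpr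
            ⟨fun h => hvw h.symm, hst hvσ⟩⟩
          have h1 : t.erase w ∈ Y := hY.2 t ht _ (Finset.erase_subset w t) hne
          have h2 : σ ⊆ t.erase w := fun x hx =>
            Finset.mem_erase.mpr ⟨fun h => hwσ (h ▸ hx), hst hx⟩
          have h3 := hmax (t.erase w) (Finset.mem_filter.mpr
            ⟨h1, Finset.mem_erase.mpr ⟨fun h => hvw h.symm, hst hvσ⟩, Finset.notMem_erase w t⟩)
          have h4 : t.erase w = σ := (Finset.eq_of_subset_of_card_le h2 h3).symm
          rw [← h4, Finset.insert_erase hwt]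
        · left
          have h3 := hmax t (Finset.mem_filter.mpr ⟨ht, hst hvσ, hwt⟩)
          exact (Finset.eq_of_subset_of_card_le hst h3).symm
      set Y' := Y.filter (fun s => ¬ σ ⊆ s) with hY'def
      have hstep : ElemCollapse Y Y' := by
        refine ⟨σ, insert w σ, hσY, ⟨hτY, ?_⟩, Finset.ssubset_insert hwσ, ?_, rfl⟩
        · intro t ht hsub
          rcases hcof t ht ((Finset.subset_insert w σ).trans hsub) with h | h
          · exact absurd (hsub (Finset.mem_insert_self w σ)) (h ▸ hwσ)
          · exact h
        · intro t ht hsub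
          rcases hcof t ht hsub with h | h
          · exact h ▸ Finset.subset_insert w σ
          · exact h ▸ subset_refl _
      have hY'c : IsComplex Y' := complex_filter_not_sub Y hY σ
      have hinv' : ∀ s ∈ Y', v ∈ s → w ∉ s → insert w s ∈ Y' := by
        intro s hs hvs hws
        rw [hY'def, Finset.mem_filter] at hs ⊢
        refine ⟨hinv s hs.1 hvs hws, fun hsub => hs.2 (fun x hx => ?_)⟩
        rcases Finset.mem_insert.mp (hsub hx) with h | h
        · exact absurd (h ▸ hx) hwσ
        · exact h
      have hcard' : (Y'.filter (fun s => v ∈ s ∧ w ∉ s)).card ≤ n := by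
        have hss : Y'.filter (fun s => v ∈ s ∧ w ∉ s) ⊂
            Y.filter (fun s => v ∈ s ∧ w ∉ s) := by
          constructor
          · intro t ht
            rw [Finset.mem_filter] at ht ⊢
            rw [hY'def, Finset.mem_filter] at ht
            exact ⟨ht.1.1, ht.2⟩
          · intro hsub
            have := hsub (Finset.mem_filter.mpr ⟨hσY, hvσ, hwσ⟩)
            rw [Finset.mem_filter, hY'def, Finset.mem_filter] at this
            exact this.1.2 (subset_refl σ)
        have := Finset.card_lt_card hss
        omega
      have heq : Y'.filter (fun s => v ∉ s) = Y.filter (fun s => v ∉ s) := by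
        ext s
        simp only [hY'def, Finset.mem_filter]
        constructor
        · rintro ⟨⟨h1, _⟩, h3⟩; exact ⟨h1, h3⟩
        · rintro ⟨h1, h3⟩; exact ⟨⟨h1, fun hsub => h3 (hsub hvσ)⟩, h3⟩
      have := ih Y' hcard' hY'c hinv'
      rw [heq] at this
      exact Relation.ReflTransGen.head hstep this

lemma elem_strong_collapse {V : Type u} (X Y : Finset (Finset V)) (hX : IsComplex X)
    (h : ElemStrongCollapse X Y) : Collapses X Y := by
  obtain ⟨v, w, hvX, ⟨hwv, hdom⟩, hYdef⟩ := h
  have hinv : ∀ s ∈ X, v ∈ s → w ∉ s → insert w s ∈ X := by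
    intro s hs hv hw
    obtain ⟨f, hf, hsf⟩ := exists_facet X s hs
    have hwf : w ∈ f := hdom f hf (hsf hv)
    exact hX.2 f hf.1 (insert w s) (Finset.insert_subset hwf hsf) ⟨w, Finset.mem_insert_self w s⟩
  rw [hYdef]
  exact key_collapse v w hwv _ X (le_refl _) hX hinv

lemma elem_strong_collapse_complex {V : Type u} (X Y : Finset (Finset V)) (hX : IsComplex X)
    (h : ElemStrongCollapse X Y) : IsComplex Y := by
  obtain ⟨v, w, hvX, hdom, hYdef⟩ := h
  rw [hYdef]
  exact complex_filter_notMem X hX v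

/-- Barmak–Minian. A strong collapse is, in particular, a simplicial
collapse. -/
theorem stmt2 {V : Type u} (X Y : Finset (Finset V)) (hX : IsComplex X)
    (h : StrongCollapses X Y) : Collapses X Y := by
  revert hX
  induction h using Relation.ReflTransGen.head_induction_on with
  | refl => exact fun _ => Relation.ReflTransGen.refl
  | head hac _ ih =>
    intro hX
    exact Relation.ReflTransGen.trans
      (elem_strong_collapse _ _ hX hac)
      (ih (elem_strong_collapse_complex _ _ hX hac))
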